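/- arXiv:1711.05515 — 2 statements merged into one kernel-verified Lean document; each statement's English description precedes it below -/
import Mathlib

section
/- Invariance of the extended tangent frame under the linearized dynamics. Let M ⊂ ℝ^{2n} be open with exact symplectic form Ω(z) = (Da(z))^T − Da(z), let H: M → ℝ and p: M → ℝ^{n−d} be C², with Hamiltonian vector fields X_H = Ω^{-1}(DH)^T and X_p = Ω^{-1}(Dp)^T, and assume the commuting condition DX_H(z)X_p(z) = DX_p(z)[X_H(z)] holds for all z ∈ M (which follows from the involution {H,p_j} = 0). Suppose K: 𝕋^d → M is C² and satisfies the invariance equation X_H(K(θ)) = DK(θ)ω for all θ ∈ 𝕋^d. Then the frame L(θ) = (DK(θ) X_p(K(θ))) satisfies DX_H(K(θ)) L(θ) − DL(θ)[ω] = O_{2n×n} for all θ ∈ 𝕋^d; that is, both D(DK(θ))[ω] = DX_H(K(θ)) DK(θ) and D(X_p∘K)(θ)[ω] = DX_H(K(θ)) X_p(K(θ)) hold. -/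
open scoped BigOperators
open MeasureTheory
open scoped Matrix

noncomputable section

namespace KAM

/-! ## Complex strips of the torus and periodic functions -/

/-- The open complex strip of width `ρ` around `ℝ^d` (representing `𝕋^d_ρ`). -/
def strip (d : ℕ) (ρ : ℝ) : Set (Fin d → ℂ) := {θ | ∀ i, |(θ i).im| < ρ}

/-- The closed complex strip of width `ρ`. -/
def stripCl (d : ℕ) (ρ : ℝ) : Set (Fin d → ℂ) := {θ | ∀ i, |(θ i).im| ≤ ρ}

/-- 1-periodicity (in each variable) of a function on `ℂ^d`. -/
def Per {d : ℕ} (u : (Fin d → ℂ) → ℂ) : Prop :=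
  ∀ θ (k : Fin d → ℤ), u (θ + fun i => (k i : ℂ)) = u θ

/-- The canonical inclusion `ℝ^d ↪ ℂ^d`. -/
def cx {d : ℕ} (x : Fin d → ℝ) : Fin d → ℂ := fun i => (x i : ℂ)

/-- A real analytic 1-periodic function on the strip `𝕋^d_ρ`: holomorphic on the open strip,
continuous on the closed strip, and real-valued on real points. -/
structure RAnalytic (d : ℕ) (ρ : ℝ) (u : (Fin d → ℂ) → ℂ) : Prop where
  per : Per u
  holo : DifferentiableOn ℂ u (strip d ρ)
  cont : ContinuousOn u (stripCl d ρ)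
  isReal : ∀ x : Fin d → ℝ, (u (cx x)).im = 0

/-! ## Norms -/

/-- Sup-norm of a scalar function over the closed strip. -/
def unorm {d : ℕ} (ρ : ℝ) (u : (Fin d → ℂ) → ℂ) : ℝ :=
  sSup ((fun θ => ‖u θ‖) '' stripCl d ρ)

/-- Norm of a matrix-valued map over the strip: maximal row sum of entry norms. -/
def mnorm {d : ℕ} {I J : Type} [Fintype I] [Fintype J] (ρ : ℝ)
    (M : (Fin d → ℂ) → Matrix I J ℂ) : ℝ :=
  ⨆ i : I, ∑ j : J, unorm ρ (fun θ => M θ i j)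

/-- Norm of a (column) vector-valued map over the strip. -/
def vnorm {d : ℕ} {I : Type} [Fintype I] (ρ : ℝ) (F : (Fin d → ℂ) → I → ℂ) : ℝ :=
  ⨆ i : I, unorm ρ (fun θ => F θ i)

/-- Norm of a constant complex matrix: maximal absolute row sum. -/
def matNorm {I J : Type} [Fintype I] [Fintype J] (M : Matrix I J ℂ) : ℝ :=
  ⨆ i : I, ∑ j : J, ‖M i j‖

/-- Norm of a constant complex (column) vector. -/
def vecNorm {I : Type} [Fintype I] (v : I → ℂ) : ℝ := ⨆ i : I, ‖v i‖

/-- Sup-norm of a scalar function over a set `B ⊆ ℂ^m`. -/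
def bnorm {m : ℕ} (B : Set (Fin m → ℂ)) (f : (Fin m → ℂ) → ℂ) : ℝ :=
  sSup ((fun z => ‖f z‖) '' B)

/-- Norm of a matrix-valued map over a set `B`. -/
def mbnorm {m : ℕ} {I J : Type} [Fintype I] [Fintype J] (B : Set (Fin m → ℂ))
    (M : (Fin m → ℂ) → Matrix I J ℂ) : ℝ :=
  ⨆ i : I, ∑ j : J, bnorm B (fun z => M z i j)

/-- Norm of a vector-valued map over a set `B`. -/
def vbnorm {m : ℕ} {I : Type} [Fintype I] (B : Set (Fin m → ℂ))
    (F : (Fin m → ℂ) → I → ℂ) : ℝ :=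
  ⨆ i : I, bnorm B (fun z => F z i)

/-! ## Derivatives -/

/-- Partial derivative `∂f/∂z_ℓ` of a scalar function on `ℂ^m`. -/
def pd {m : ℕ} (ℓ : Fin m) (f : (Fin m → ℂ) → ℂ) : (Fin m → ℂ) → ℂ :=
  fun z => fderiv ℂ f z (Pi.single ℓ 1)

/-- Jacobian matrix of a vector-valued map. -/
def jac {m : ℕ} {I : Type} (F : (Fin m → ℂ) → I → ℂ) (z : Fin m → ℂ) :
    Matrix I (Fin m) ℂ :=
  fun i ℓ => pd ℓ (fun w => F w i) z

/-- `‖Df‖_B` for scalar `f`: sum of the sup-norms of the partial derivatives. -/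
def d1norm {m : ℕ} (B : Set (Fin m → ℂ)) (f : (Fin m → ℂ) → ℂ) : ℝ :=
  ∑ ℓ : Fin m, bnorm B (pd ℓ f)

/-- `‖D²f‖_B` for scalar `f`. -/
def d2norm {m : ℕ} (B : Set (Fin m → ℂ)) (f : (Fin m → ℂ) → ℂ) : ℝ :=
  ∑ ℓ₁ : Fin m, ∑ ℓ₂ : Fin m, bnorm B (pd ℓ₂ (pd ℓ₁ f))

/-- `‖DM‖_B` for matrix-valued `M`. -/
def md1norm {m : ℕ} {I J : Type} [Fintype I] [Fintype J] (B : Set (Fin m → ℂ))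
    (M : (Fin m → ℂ) → Matrix I J ℂ) : ℝ :=
  ⨆ i : I, ∑ j : J, d1norm B (fun z => M z i j)

/-- `‖D²M‖_B` for matrix-valued `M`. -/
def md2norm {m : ℕ} {I J : Type} [Fintype I] [Fintype J] (B : Set (Fin m → ℂ))
    (M : (Fin m → ℂ) → Matrix I J ℂ) : ℝ :=
  ⨆ i : I, ∑ j : J, d2norm B (fun z => M z i j)

/-- `‖DF‖_B` for (column) vector-valued `F`. -/
def vd1norm {m : ℕ} {I : Type} [Fintype I] (B : Set (Fin m → ℂ))
    (F : (Fin m → ℂ) → I → ℂ) : ℝ :=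
  ⨆ i : I, d1norm B (fun z => F z i)

/-- `‖D²F‖_B` for (column) vector-valued `F`. -/
def vd2norm {m : ℕ} {I : Type} [Fintype I] (B : Set (Fin m → ℂ))
    (F : (Fin m → ℂ) → I → ℂ) : ℝ :=
  ⨆ i : I, d2norm B (fun z => F z i)

/-- Directional derivative `DM(θ)[ω]` of a matrix-valued map, entrywise, in the (real)
direction `ω`. -/
def dirD {d : ℕ} {I J : Type} (M : (Fin d → ℂ) → Matrix I J ℂ) (ω : Fin d → ℝ) :
    (Fin d → ℂ) → Matrix I J ℂ :=
  fun θ i j => ∑ ℓ : Fin d, (ω ℓ : ℂ) * pd ℓ (fun w => M w i j) θ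

/-! ## Averages and the cohomology operator -/

/-- Average `⟨u⟩` of a (periodic) function over the torus. -/
def avg {d : ℕ} (u : (Fin d → ℂ) → ℂ) : ℂ :=
  ∫ x in Set.Icc (0 : Fin d → ℝ) 1, u (cx x)

/-- Entrywise average of a matrix-valued map. -/
def mavg {d : ℕ} {I J : Type} (M : (Fin d → ℂ) → Matrix I J ℂ) : Matrix I J ℂ :=
  fun i j => avg (fun θ => M θ i j)

/-- Entrywise average of a vector-valued map. -/
def vavg {d : ℕ} {I : Type} (F : (Fin d → ℂ) → I → ℂ) : I → ℂ :=
  fun i => avg (fun θ => F θ i)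

/-- The operator `L_ω u = -∑ᵢ ωᵢ ∂u/∂θᵢ`. -/
def Lop {d : ℕ} (ω : Fin d → ℝ) (u : (Fin d → ℂ) → ℂ) : (Fin d → ℂ) → ℂ :=
  fun θ => -∑ i : Fin d, (ω i : ℂ) * pd i u θ

/-! ## Diophantine vectors, distances, realness -/

/-- The Diophantine class `Δ(γ,τ)`. -/
def Dioph (d : ℕ) (γ τ : ℝ) : Set (Fin d → ℝ) :=
  {ω | ∀ k : Fin d → ℤ, k ≠ 0 →
    γ / (∑ i, |(k i : ℝ)|) ^ τ ≤ |∑ i, (k i : ℝ) * ω i|}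

/-- Distance between two sets in a metric space. -/
def setDist {α : Type*} [PseudoMetricSpace α] (s t : Set α) : ℝ :=
  sInf ((fun p : α × α => dist p.1 p.2) '' s ×ˢ t)

/-- A function is real-valued on the real points of `B`. -/
def RealOn {m : ℕ} (B : Set (Fin m → ℂ)) (f : (Fin m → ℂ) → ℂ) : Prop :=
  ∀ x : Fin m → ℝ, cx x ∈ B → (f (cx x)).im = 0

/-! ## Real-variable versions (for statements on `M ⊆ ℝ^{2n}`) -/

/-- Partial derivative of a real function of several real variables. -/
def pdR {m : ℕ} (ℓ : Fin m) (f : (Fin m → ℝ) → ℝ) : (Fin m → ℝ) → ℝ :=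
  fun z => fderiv ℝ f z (Pi.single ℓ 1)

/-- Jacobian matrix of a real vector-valued map. -/
def jacR {m : ℕ} {I : Type} (F : (Fin m → ℝ) → I → ℝ) (z : Fin m → ℝ) :
    Matrix I (Fin m) ℝ :=
  fun i ℓ => pdR ℓ (fun w => F w i) z

/-- Directional derivative `DM(z)[v]` of a real matrix-valued map. -/
def matDirR {m : ℕ} {I J : Type} (M : (Fin m → ℝ) → Matrix I J ℝ) (v : Fin m → ℝ)
    (z : Fin m → ℝ) : Matrix I J ℝ :=
  fun i j => ∑ ℓ : Fin m, v ℓ * pdR ℓ (fun w => M w i j) z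

/-! ## The geometrically adapted frames -/

/-- Index type for the `n = d + (n-d)` columns of the adapted frames. -/
abbrev Idx (n d : ℕ) := Fin d ⊕ Fin (n - d)

/-- The tangent frame `L(θ) = (DK(θ)  X_p(K(θ)))`. -/
def Lframe (n d : ℕ) (K : (Fin d → ℂ) → Fin (2*n) → ℂ)
    (Xp : (Fin (2*n) → ℂ) → Matrix (Fin (2*n)) (Fin (n-d)) ℂ) :
    (Fin d → ℂ) → Matrix (Fin (2*n)) (Idx n d) ℂ :=
  fun θ => Matrix.fromCols (jac K θ) (Xp (K θ))

/-- `G_L(θ) = L(θ)ᵀ G(K(θ)) L(θ)`. -/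
def Gmat (n d : ℕ) (G : (Fin (2*n) → ℂ) → Matrix (Fin (2*n)) (Fin (2*n)) ℂ)
    (K : (Fin d → ℂ) → Fin (2*n) → ℂ)
    (Xp : (Fin (2*n) → ℂ) → Matrix (Fin (2*n)) (Fin (n-d)) ℂ) :
    (Fin d → ℂ) → Matrix (Idx n d) (Idx n d) ℂ :=
  fun θ => (Lframe n d K Xp θ)ᵀ * G (K θ) * Lframe n d K Xp θ

/-- `B(θ) = (L(θ)ᵀ G(K(θ)) L(θ))⁻¹`. -/
def Bmat (n d : ℕ) (G : (Fin (2*n) → ℂ) → Matrix (Fin (2*n)) (Fin (2*n)) ℂ)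
    (K : (Fin d → ℂ) → Fin (2*n) → ℂ)
    (Xp : (Fin (2*n) → ℂ) → Matrix (Fin (2*n)) (Fin (n-d)) ℂ) :
    (Fin d → ℂ) → Matrix (Idx n d) (Idx n d) ℂ :=
  fun θ => (Gmat n d G K Xp θ)⁻¹

/-- `Ω̃ = JᵀΩJ`. -/
def Omt (n : ℕ) (Ω J : (Fin (2*n) → ℂ) → Matrix (Fin (2*n)) (Fin (2*n)) ℂ) :
    (Fin (2*n) → ℂ) → Matrix (Fin (2*n)) (Fin (2*n)) ℂ :=
  fun z => (J z)ᵀ * Ω z * J z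

/-- `A(θ) = -(1/2) B(θ)ᵀ L(θ)ᵀ Ω̃(K(θ)) L(θ) B(θ)`. -/
def Amat (n d : ℕ) (Ω G J : (Fin (2*n) → ℂ) → Matrix (Fin (2*n)) (Fin (2*n)) ℂ)
    (K : (Fin d → ℂ) → Fin (2*n) → ℂ)
    (Xp : (Fin (2*n) → ℂ) → Matrix (Fin (2*n)) (Fin (n-d)) ℂ) :
    (Fin d → ℂ) → Matrix (Idx n d) (Idx n d) ℂ :=
  fun θ => (-(1/2 : ℂ)) •
    ((Bmat n d G K Xp θ)ᵀ * (Lframe n d K Xp θ)ᵀ * Omt n Ω J (K θ) *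
      Lframe n d K Xp θ * Bmat n d G K Xp θ)

/-- `N⁰(θ) = J(K(θ)) L(θ)`. -/
def N0mat (n d : ℕ) (J : (Fin (2*n) → ℂ) → Matrix (Fin (2*n)) (Fin (2*n)) ℂ)
    (K : (Fin d → ℂ) → Fin (2*n) → ℂ)
    (Xp : (Fin (2*n) → ℂ) → Matrix (Fin (2*n)) (Fin (n-d)) ℂ) :
    (Fin d → ℂ) → Matrix (Fin (2*n)) (Idx n d) ℂ :=
  fun θ => J (K θ) * Lframe n d K Xp θ

/-- `N(θ) = L(θ)A(θ) + N⁰(θ)B(θ)`. -/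
def Nmat (n d : ℕ) (Ω G J : (Fin (2*n) → ℂ) → Matrix (Fin (2*n)) (Fin (2*n)) ℂ)
    (K : (Fin d → ℂ) → Fin (2*n) → ℂ)
    (Xp : (Fin (2*n) → ℂ) → Matrix (Fin (2*n)) (Fin (n-d)) ℂ) :
    (Fin d → ℂ) → Matrix (Fin (2*n)) (Idx n d) ℂ :=
  fun θ => Lframe n d K Xp θ * Amat n d Ω G J K Xp θ +
    N0mat n d J K Xp θ * Bmat n d G K Xp θ

/-- The torsion matrix
    `T(θ) = N(θ)ᵀ Ω(K(θ)) (DX_H(K(θ)) N(θ) - DN(θ)[ω])`. -/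
def Tors (n d : ℕ) (Ω G J : (Fin (2*n) → ℂ) → Matrix (Fin (2*n)) (Fin (2*n)) ℂ)
    (XH : (Fin (2*n) → ℂ) → Fin (2*n) → ℂ)
    (K : (Fin d → ℂ) → Fin (2*n) → ℂ)
    (Xp : (Fin (2*n) → ℂ) → Matrix (Fin (2*n)) (Fin (n-d)) ℂ)
    (ω : Fin d → ℝ) :
    (Fin d → ℂ) → Matrix (Idx n d) (Idx n d) ℂ :=
  fun θ => (Nmat n d Ω G J K Xp θ)ᵀ * Ω (K θ) *
    (jac XH (K θ) * Nmat n d Ω G J K Xp θ - dirD (Nmat n d Ω G J K Xp) ω θ)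

/-- The juxtaposed frame `P(θ) = (L(θ)  N(θ))`. -/
def Pmat (n d : ℕ) (Ω G J : (Fin (2*n) → ℂ) → Matrix (Fin (2*n)) (Fin (2*n)) ℂ)
    (K : (Fin d → ℂ) → Fin (2*n) → ℂ)
    (Xp : (Fin (2*n) → ℂ) → Matrix (Fin (2*n)) (Fin (n-d)) ℂ) :
    (Fin d → ℂ) → Matrix (Fin (2*n)) (Idx n d ⊕ Idx n d) ℂ :=
  fun θ => Matrix.fromCols (Lframe n d K Xp θ) (Nmat n d Ω G J K Xp θ)

/-- The standard symplectic matrix `Ω₀` on the index type `I ⊕ I`. -/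
def Om0 (I : Type) [DecidableEq I] : Matrix (I ⊕ I) (I ⊕ I) ℂ :=
  Matrix.fromBlocks 0 (-1) 1 0

/-- The invariance error `E(θ) = X_H(K(θ)) - DK(θ)ω`. -/
def Err (n d : ℕ) (XH : (Fin (2*n) → ℂ) → Fin (2*n) → ℂ)
    (K : (Fin d → ℂ) → Fin (2*n) → ℂ) (ω : Fin d → ℝ) :
    (Fin d → ℂ) → Fin (2*n) → ℂ :=
  fun θ i => XH (K θ) i - Matrix.mulVec (jac K θ) (cx ω) i

/-- The extended frequency vector `ω̂ = (ω, 0_{n-d})`. -/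
def hatOm (n d : ℕ) (ω : Fin d → ℝ) : Idx n d → ℂ :=
  Sum.elim (fun i => (ω i : ℂ)) 0

/-- The extended torsion matrix `T_c(θ)` of the iso-energetic theorem. -/
def TorsC (n d : ℕ) (Ω G J : (Fin (2*n) → ℂ) → Matrix (Fin (2*n)) (Fin (2*n)) ℂ)
    (XH : (Fin (2*n) → ℂ) → Fin (2*n) → ℂ)
    (K : (Fin d → ℂ) → Fin (2*n) → ℂ)
    (Xp : (Fin (2*n) → ℂ) → Matrix (Fin (2*n)) (Fin (n-d)) ℂ)
    (c : (Fin (2*n) → ℂ) → ℂ)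
    (ω : Fin d → ℝ) :
    (Fin d → ℂ) → Matrix (Idx n d ⊕ Unit) (Idx n d ⊕ Unit) ℂ :=
  fun θ => Matrix.fromBlocks (Tors n d Ω G J XH K Xp ω θ)
    (fun i _ => hatOm n d ω i)
    (fun _ j => Matrix.vecMul (fun ℓ => pd ℓ c (K θ)) (Nmat n d Ω G J K Xp θ) j)
    0

end KAM

private lemma KAM_clm_sum {m : ℕ} (L : (Fin m → ℝ) →L[ℝ] ℝ) (v : Fin m → ℝ) :
    L v = ∑ ℓ : Fin m, v ℓ * L (Pi.single ℓ 1) := by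
  have hv : v = ∑ ℓ : Fin m, v ℓ • (Pi.single ℓ 1 : Fin m → ℝ) := by
    funext j
    simp [Finset.sum_apply, Pi.single_apply]
  have h2 : L v = L (∑ ℓ : Fin m, v ℓ • (Pi.single ℓ 1 : Fin m → ℝ)) := by rw [← hv]
  rw [h2, map_sum]
  simp [smul_eq_mul]

private lemma KAM_pdR_diff {m : ℕ} {f : (Fin m → ℝ) → ℝ} {z : Fin m → ℝ}
    (hf : ContDiffAt ℝ 2 f z) (ℓ : Fin m) : DifferentiableAt ℝ (KAM.pdR ℓ f) z := by
  have h1 : ContDiffAt ℝ 1 (fderiv ℝ f) z := hf.fderiv_right (by norm_num)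
  exact ((h1.clm_apply contDiffAt_const).differentiableAt one_ne_zero)

private lemma KAM_det_diff {E : Type*} [NormedAddCommGroup E] [NormedSpace ℝ E]
    {N : ℕ} {A : E → Matrix (Fin N) (Fin N) ℝ} {z : E}
    (h : ∀ i j, DifferentiableAt ℝ (fun w => A w i j) z) :
    DifferentiableAt ℝ (fun w => (A w).det) z := by
  simp only [Matrix.det_apply']
  apply DifferentiableAt.fun_sum
  intro σ _
  apply DifferentiableAt.const_mul
  exact (HasFDerivAt.finset_prod (fun i _ => (h (σ i) i).hasFDerivAt)).differentiableAt

private lemma KAM_inv_entry_diff {E : Type*} [NormedAddCommGroup E] [NormedSpace ℝ E]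
    {N : ℕ} {A : E → Matrix (Fin N) (Fin N) ℝ} {z : E}
    (h : ∀ i j, DifferentiableAt ℝ (fun w => A w i j) z)
    (hdet : (A z).det ≠ 0) (i j : Fin N) :
    DifferentiableAt ℝ (fun w => (A w)⁻¹ i j) z := by
  have hadj : DifferentiableAt ℝ (fun w => (A w).adjugate i j) z := by
    simp only [Matrix.adjugate_apply]
    apply KAM_det_diff
    intro k l
    by_cases hk : k = j
    · simpa [Matrix.updateRow_apply, hk] using differentiableAt_const ((Pi.single i 1 : Fin N → ℝ) l)
    · simpa [Matrix.updateRow_apply, hk] using h k l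
  have hdd : DifferentiableAt ℝ (fun w => (A w).det) z := KAM_det_diff h
  have heq : (fun w => (A w)⁻¹ i j) = fun w => ((A w).det)⁻¹ * (A w).adjugate i j := by
    funext w
    rw [Matrix.inv_def, Matrix.smul_apply, Ring.inverse_eq_inv', smul_eq_mul]
  rw [heq]
  exact (hdd.inv hdet).mul hadj

private lemma KAM_chain {N d : ℕ} {g : (Fin N → ℝ) → ℝ} {K : (Fin d → ℝ) → Fin N → ℝ}
    {x : Fin d → ℝ} (hg : DifferentiableAt ℝ g (K x))
    (hK : ∀ i, DifferentiableAt ℝ (fun y => K y i) x) (v : Fin d → ℝ) :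
    ∑ ℓ : Fin d, v ℓ * KAM.pdR ℓ (fun y => g (K y)) x
      = ∑ m : Fin N, (∑ ℓ : Fin d, v ℓ * KAM.pdR ℓ (fun y => K y m) x) * KAM.pdR m g (K x) := by
  have hKd : DifferentiableAt ℝ K x := differentiableAt_pi.2 hK
  have hcomp : fderiv ℝ (fun y => g (K y)) x = (fderiv ℝ g (K x)).comp (fderiv ℝ K x) :=
    fderiv_comp x hg hKd
  simp only [KAM.pdR]
  calc ∑ ℓ : Fin d, v ℓ * fderiv ℝ (fun y => g (K y)) x (Pi.single ℓ 1)
      = fderiv ℝ (fun y => g (K y)) x v := (KAM_clm_sum _ v).symm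
    _ = fderiv ℝ g (K x) (fderiv ℝ K x v) := by rw [hcomp]; rfl
    _ = ∑ m : Fin N, (fderiv ℝ K x v) m * fderiv ℝ g (K x) (Pi.single m 1) := KAM_clm_sum _ _
    _ = ∑ m : Fin N, (∑ ℓ : Fin d, v ℓ * fderiv ℝ (fun y => K y m) x (Pi.single ℓ 1))
          * fderiv ℝ g (K x) (Pi.single m 1) := by
        refine Finset.sum_congr rfl fun m _ => ?_
        have hm : (fderiv ℝ K x) v m = fderiv ℝ (fun y => K y m) x v := by
          rw [fderiv_pi hK]
          simp
        rw [hm, KAM_clm_sum]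

private lemma KAM_pdR_symm {m : ℕ} {f : (Fin m → ℝ) → ℝ} (hf : ContDiff ℝ 2 f)
    (x : Fin m → ℝ) (a b : Fin m) :
    KAM.pdR a (KAM.pdR b f) x = KAM.pdR b (KAM.pdR a f) x := by
  have hdf : Differentiable ℝ f := hf.differentiable (by norm_num)
  have h1 : ContDiff ℝ 1 (fderiv ℝ f) := hf.fderiv_right (by norm_num)
  have hd1 : DifferentiableAt ℝ (fderiv ℝ f) x := (h1.differentiable one_ne_zero) x
  have hsymm := second_derivative_symmetric (f := f) (f' := fderiv ℝ f)
    (f'' := fderiv ℝ (fderiv ℝ f) x) (fun y => (hdf y).hasFDerivAt) hd1.hasFDerivAt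
  have key : ∀ u w : Fin m → ℝ,
      fderiv ℝ (fun y => fderiv ℝ f y u) x w = fderiv ℝ (fderiv ℝ f) x w u := by
    intro u w
    have h2 : fderiv ℝ (fun y => (fderiv ℝ f y) u) x = (fderiv ℝ (fderiv ℝ f) x).flip u := by
      rw [fderiv_clm_apply hd1 (differentiableAt_const u)]
      simp
    rw [h2]; rfl
  show fderiv ℝ (fun y => fderiv ℝ f y (Pi.single b 1)) x (Pi.single a 1)
      = fderiv ℝ (fun y => fderiv ℝ f y (Pi.single a 1)) x (Pi.single b 1)
  rw [key, key, hsymm]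

open KAM Matrix in
/-- Invariance of the extended tangent frame `L(θ) = (DK(θ)  X_p(K(θ)))`
under the linearized dynamics: if `K` is invariant with frequency `ω` and `X_H`, `X_p`
commute, then `DX_H(K(θ))L(θ) - DL(θ)[ω] = 0`, i.e. both
`D(DK)(θ)[ω] = DX_H(K(θ))DK(θ)` and `D(X_p∘K)(θ)[ω] = DX_H(K(θ))X_p(K(θ))`. -/
theorem tangent_frame_invariance {n d : ℕ} (hd2 : 2 ≤ d) (hdn : d ≤ n)
    (M : Set (Fin (2*n) → ℝ)) (hM : IsOpen M)
    (a : (Fin (2*n) → ℝ) → Fin (2*n) → ℝ)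
    (ha : ∀ i, ContDiffOn ℝ 2 (fun z => a z i) M)
    (H : (Fin (2*n) → ℝ) → ℝ) (hH : ContDiffOn ℝ 2 H M)
    (p : (Fin (2*n) → ℝ) → Fin (n-d) → ℝ)
    (hp : ∀ j, ContDiffOn ℝ 2 (fun z => p z j) M)
    (Ω : (Fin (2*n) → ℝ) → Matrix (Fin (2*n)) (Fin (2*n)) ℝ)
    (hΩ : ∀ z ∈ M, Ω z = (jacR a z)ᵀ - jacR a z)
    (hinv : ∀ z ∈ M, IsUnit (Ω z))
    (XH : (Fin (2*n) → ℝ) → Fin (2*n) → ℝ)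
    (hXH : ∀ z ∈ M, XH z = Matrix.mulVec (Ω z)⁻¹ (fun ℓ => pdR ℓ H z))
    (Xp : (Fin (2*n) → ℝ) → Matrix (Fin (2*n)) (Fin (n-d)) ℝ)
    (hXp : ∀ z ∈ M, Xp z = (Ω z)⁻¹ * (jacR p z)ᵀ)
    (hcomm : ∀ z ∈ M, jacR XH z * Xp z = matDirR Xp (XH z) z)
    (ω : Fin d → ℝ)
    (K : (Fin d → ℝ) → Fin (2*n) → ℝ)
    (hKper : ∀ x (k : Fin d → ℤ), K (x + fun i => (k i : ℝ)) = K x)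
    (hKC2 : ∀ i, ContDiff ℝ 2 (fun x => K x i))
    (hKM : ∀ x, K x ∈ M)
    (hinvK : ∀ x, XH (K x) = Matrix.mulVec (jacR K x) ω) :
    ∀ x : Fin d → ℝ,
      (jacR XH (K x) *
          Matrix.fromCols (jacR K x) (Xp (K x)) -
        matDirR (fun y => Matrix.fromCols (jacR K y) (Xp (K y))) ω x = 0) ∧
      (matDirR (fun y => jacR K y) ω x = jacR XH (K x) * jacR K x) ∧
      (matDirR (fun y => Xp (K y)) ω x = jacR XH (K x) * Xp (K x)) := by
  intro x
  have hz0M : K x ∈ M := hKM x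
  have hMnhds : M ∈ nhds (K x) := hM.mem_nhds hz0M
  have hKdiff : ∀ i, DifferentiableAt ℝ (fun y => K y i) x :=
    fun i => ((hKC2 i).differentiable (by norm_num)).differentiableAt
  -- differentiability of Ω entries on M
  have hΩdiff : ∀ z ∈ M, ∀ i j, DifferentiableAt ℝ (fun w => Ω w i j) z := by
    intro z hz i j
    have heq : (fun w => Ω w i j) =ᶠ[nhds z]
        fun w => pdR i (fun u => a u j) w - pdR j (fun u => a u i) w := by
      filter_upwards [hM.mem_nhds hz] with w hw
      rw [hΩ w hw]
      simp [jacR, Matrix.sub_apply, Matrix.transpose_apply]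
    rw [heq.differentiableAt_iff]
    exact (KAM_pdR_diff ((ha j).contDiffAt (hM.mem_nhds hz)) i).sub
      (KAM_pdR_diff ((ha i).contDiffAt (hM.mem_nhds hz)) j)
  have hdet : ∀ z ∈ M, (Ω z).det ≠ 0 := by
    intro z hz
    have := (Matrix.isUnit_iff_isUnit_det _).1 (hinv z hz)
    simpa [isUnit_iff_ne_zero] using this
  have hΩinv : ∀ z ∈ M, ∀ i j, DifferentiableAt ℝ (fun w => (Ω w)⁻¹ i j) z :=
    fun z hz i j => KAM_inv_entry_diff (hΩdiff z hz) (hdet z hz) i j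
  -- differentiability of XH entries at K x
  have hXHdiff : ∀ i, DifferentiableAt ℝ (fun w => XH w i) (K x) := by
    intro i
    have heq : (fun w => XH w i) =ᶠ[nhds (K x)]
        fun w => ∑ k, (Ω w)⁻¹ i k * pdR k H w := by
      filter_upwards [hMnhds] with w hw
      rw [hXH w hw]
      simp [Matrix.mulVec, dotProduct]
    rw [heq.differentiableAt_iff]
    exact DifferentiableAt.fun_sum fun k _ =>
      (hΩinv _ hz0M i k).mul (KAM_pdR_diff (hH.contDiffAt hMnhds) k)
  -- differentiability of Xp entries at K x
  have hXpdiff : ∀ i j, DifferentiableAt ℝ (fun w => Xp w i j) (K x) := by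
    intro i j
    have heq : (fun w => Xp w i j) =ᶠ[nhds (K x)]
        fun w => ∑ k, (Ω w)⁻¹ i k * pdR k (fun u => p u j) w := by
      filter_upwards [hMnhds] with w hw
      rw [hXp w hw]
      simp [Matrix.mul_apply, jacR, Matrix.transpose_apply]
    rw [heq.differentiableAt_iff]
    exact DifferentiableAt.fun_sum fun k _ =>
      (hΩinv _ hz0M i k).mul (KAM_pdR_diff ((hp j).contDiffAt hMnhds) k)
  -- ∑ ω-weighted partials of K give XH ∘ K
  have h2 : ∀ m, (∑ ℓ, ω ℓ * pdR ℓ (fun y => K y m) x) = XH (K x) m := by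
    intro m
    rw [hinvK x]
    simp only [Matrix.mulVec, dotProduct, jacR]
    exact Finset.sum_congr rfl fun ℓ _ => mul_comm _ _
  -- Part 2 : the Xp columns
  have hXpEq : matDirR (fun y => Xp (K y)) ω x = jacR XH (K x) * Xp (K x) := by
    ext i j
    have hch := KAM_chain (g := fun z => Xp z i j) (hXpdiff i j) hKdiff ω
    calc matDirR (fun y => Xp (K y)) ω x i j
        = ∑ ℓ, ω ℓ * pdR ℓ (fun y => Xp (K y) i j) x := rfl
      _ = ∑ m, (∑ ℓ, ω ℓ * pdR ℓ (fun y => K y m) x) * pdR m (fun z => Xp z i j) (K x) := hch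
      _ = ∑ m, XH (K x) m * pdR m (fun z => Xp z i j) (K x) := by
          exact Finset.sum_congr rfl fun m _ => by rw [h2 m]
      _ = matDirR Xp (XH (K x)) (K x) i j := rfl
      _ = (jacR XH (K x) * Xp (K x)) i j := by rw [← hcomm _ hz0M]
  -- Part 1 : the DK columns
  have hDKEq : matDirR (fun y => jacR K y) ω x = jacR XH (K x) * jacR K x := by
    ext i ℓ
    have hf : ContDiff ℝ 2 (fun w => K w i) := hKC2 i
    have hsum : ∀ y, XH (K y) i = ∑ m, ω m * pdR m (fun w => K w i) y := by
      intro y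
      rw [hinvK y]
      simp only [Matrix.mulVec, dotProduct, jacR]
      exact Finset.sum_congr rfl fun m _ => mul_comm _ _
    have hderivsum : pdR ℓ (fun y => ∑ m, ω m * pdR m (fun w => K w i) y) x
        = ∑ m, ω m * pdR ℓ (pdR m (fun w => K w i)) x := by
      show fderiv ℝ (fun y => ∑ m, ω m * pdR m (fun w => K w i) y) x (Pi.single ℓ 1)
          = ∑ m, ω m * fderiv ℝ (pdR m (fun w => K w i)) x (Pi.single ℓ 1)
      rw [fderiv_fun_sum (fun m _ => (KAM_pdR_diff hf.contDiffAt m).const_mul (ω m))]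
      simp only [ContinuousLinearMap.coe_sum', Finset.sum_apply]
      refine Finset.sum_congr rfl fun m _ => ?_
      rw [fderiv_const_mul (KAM_pdR_diff hf.contDiffAt m) (ω m)]
      rfl
    have hchain := KAM_chain (g := fun z => XH z i) (hXHdiff i) hKdiff (Pi.single ℓ 1)
    have hsingle : ∀ g : (Fin d → ℝ) → ℝ, ∀ u : Fin d → ℝ,
        (∑ ℓ' : Fin d, (Pi.single ℓ 1 : Fin d → ℝ) ℓ' * pdR ℓ' g u) = pdR ℓ g u := by
      intro g u
      simp [Pi.single_apply]
    rw [hsingle] at hchain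
    calc matDirR (fun y => jacR K y) ω x i ℓ
        = ∑ m, ω m * pdR m (pdR ℓ (fun w => K w i)) x := rfl
      _ = ∑ m, ω m * pdR ℓ (pdR m (fun w => K w i)) x := by
          exact Finset.sum_congr rfl fun m _ => by rw [KAM_pdR_symm hf x m ℓ]
      _ = pdR ℓ (fun y => ∑ m, ω m * pdR m (fun w => K w i) y) x := hderivsum.symm
      _ = pdR ℓ (fun y => XH (K y) i) x := by
          have : (fun y => ∑ m, ω m * pdR m (fun w => K w i) y) = fun y => XH (K y) i :=
            funext fun y => (hsum y).symm
          rw [this]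
      _ = ∑ m, (∑ ℓ' : Fin d, (Pi.single ℓ 1 : Fin d → ℝ) ℓ' * pdR ℓ' (fun y => K y m) x)
            * pdR m (fun z => XH z i) (K x) := hchain
      _ = ∑ m, pdR ℓ (fun y => K y m) x * pdR m (fun z => XH z i) (K x) := by
          exact Finset.sum_congr rfl fun m _ => by rw [hsingle]
      _ = (jacR XH (K x) * jacR K x) i ℓ := by
          rw [Matrix.mul_apply]
          exact Finset.sum_congr rfl fun m _ => mul_comm _ _
  refine ⟨?_, hDKEq, hXpEq⟩
  have hL : matDirR (fun y => Matrix.fromCols (jacR K y) (Xp (K y))) ω x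
      = Matrix.fromCols (matDirR (fun y => jacR K y) ω x)
          (matDirR (fun y => Xp (K y)) ω x) := by
    ext i j
    cases j <;> rfl
  rw [Matrix.mul_fromCols, hL, hDKEq, hXpEq, sub_self]
end
end

section
/- Torsion rows for an exactly invariant torus with a symplectic frame. Let M ⊂ ℝ^{2n} be open with exact symplectic form Ω(z) = (Da(z))^T − Da(z), H: M → ℝ with X_H = Ω^{-1}(DH)^T, and p = (p₁,…,p_{n−d}): M → ℝ^{n−d} with X_p = Ω^{-1}(Dp)^T. Suppose K: 𝕋^d → M is C¹ and satisfies X_H(K(θ)) = DK(θ)ω for all θ, and suppose N: 𝕋^d → ℝ^{2n×n} is any map for which the juxtaposed frame P(θ) = (L(θ) N(θ)), with L(θ) = (DK(θ) X_p(K(θ))), is symplectic: P(θ)^T Ω(K(θ)) P(θ) = Ω₀ for all θ, where Ω₀ = [[O_n, −I_n],[I_n, O_n]]. Then for all θ ∈ 𝕋^d: DH(K(θ)) N(θ) = (ω^T, 0_{n−d}^T) ∈ ℝ^{1×n}, and for each j = 1,…,n−d, Dp_j(K(θ)) N(θ) = e_{d+j}^T, where e_{d+j} is the (d+j)-th canonical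 basis vector of ℝ^n. -/
open scoped BigOperators
open MeasureTheory
open scoped Matrix

noncomputable section

open KAM Matrix in
/-- Torsion rows for an exactly invariant torus with a symplectic frame:
if `K` is invariant (`X_H∘K = DK·ω`) and `P = (L N)` is symplectic
(`PᵀΩ(K)P = Ω₀`), then `DH(K(θ))N(θ) = (ωᵀ, 0ᵀ)` and `Dp_j(K(θ))N(θ) = e_{d+j}ᵀ`. -/
theorem torsion_rows_invariant_torus {n d : ℕ} (hd2 : 2 ≤ d) (hdn : d ≤ n)
    (M : Set (Fin (2*n) → ℝ)) (hM : IsOpen M)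
    (a : (Fin (2*n) → ℝ) → Fin (2*n) → ℝ)
    (ha : ∀ i, ∀ z ∈ M, DifferentiableAt ℝ (fun w => a w i) z)
    (H : (Fin (2*n) → ℝ) → ℝ) (hH : ∀ z ∈ M, DifferentiableAt ℝ H z)
    (p : (Fin (2*n) → ℝ) → Fin (n-d) → ℝ)
    (hp : ∀ j, ∀ z ∈ M, DifferentiableAt ℝ (fun w => p w j) z)
    (Ω : (Fin (2*n) → ℝ) → Matrix (Fin (2*n)) (Fin (2*n)) ℝ)
    (hΩ : ∀ z ∈ M, Ω z = (jacR a z)ᵀ - jacR a z)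
    (hinv : ∀ z ∈ M, IsUnit (Ω z))
    (XH : (Fin (2*n) → ℝ) → Fin (2*n) → ℝ)
    (hXH : ∀ z ∈ M, XH z = Matrix.mulVec (Ω z)⁻¹ (fun ℓ => pdR ℓ H z))
    (Xp : (Fin (2*n) → ℝ) → Matrix (Fin (2*n)) (Fin (n-d)) ℝ)
    (hXp : ∀ z ∈ M, Xp z = (Ω z)⁻¹ * (jacR p z)ᵀ)
    (ω : Fin d → ℝ)
    (K : (Fin d → ℝ) → Fin (2*n) → ℝ)
    (hKper : ∀ x (k : Fin d → ℤ), K (x + fun i => (k i : ℝ)) = K x)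
    (hKC1 : ∀ i, ContDiff ℝ 1 (fun x => K x i))
    (hKM : ∀ x, K x ∈ M)
    (hinvK : ∀ x, XH (K x) = Matrix.mulVec (jacR K x) ω)
    (N : (Fin d → ℝ) → Matrix (Fin (2*n)) (Idx n d) ℝ)
    (hsym : ∀ x,
      (Matrix.fromCols (Matrix.fromCols (jacR K x) (Xp (K x))) (N x))ᵀ *
          Ω (K x) *
          Matrix.fromCols (Matrix.fromCols (jacR K x) (Xp (K x))) (N x) =
        (Matrix.fromBlocks 0 (-1) 1 0 :
          Matrix (Idx n d ⊕ Idx n d) (Idx n d ⊕ Idx n d) ℝ)) :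
    ∀ x : Fin d → ℝ,
      (Matrix.vecMul (fun ℓ => pdR ℓ H (K x)) (N x)
          = Sum.elim (fun i => ω i) (fun _ => (0:ℝ))) ∧
      ∀ j : Fin (n-d),
        Matrix.vecMul (fun ℓ => pdR ℓ (fun z => p z j) (K x)) (N x)
          = Pi.single (Sum.inr j : Idx n d) 1 := by
  intro x
  have hKx := hKM x
  have hdet : IsUnit (Ω (K x)).det := (Matrix.isUnit_iff_isUnit_det _).mp (hinv _ hKx)
  have hΩinv : Ω (K x) * (Ω (K x))⁻¹ = 1 := Matrix.mul_nonsing_inv _ hdet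
  set L : Matrix (Fin (2*n)) (Idx n d) ℝ :=
    Matrix.fromCols (jacR K x) (Xp (K x)) with hLdef
  have hNL : (N x)ᵀ * Ω (K x) * L = 1 := by
    have h := hsym x
    rw [Matrix.transpose_fromCols, Matrix.fromRows_mul,
      Matrix.fromRows_mul_fromCols] at h
    have h2 := congrArg Matrix.toBlocks₂₁ h
    simp only [Matrix.toBlocks_fromBlocks₂₁] at h2
    rw [hLdef, h2]
  have hDH : (fun ℓ => pdR ℓ H (K x)) = Matrix.mulVec (Ω (K x)) (XH (K x)) := by
    rw [hXH _ hKx, Matrix.mulVec_mulVec, hΩinv, Matrix.one_mulVec]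
  have hXHL : XH (K x) = Matrix.mulVec L (Sum.elim ω (fun _ => (0:ℝ))) := by
    rw [hinvK x, hLdef, Matrix.fromCols_mulVec_sumElim,
      show (fun _ : Fin (n-d) => (0:ℝ)) = 0 from rfl, Matrix.mulVec_zero, add_zero]
  have hjp : (jacR p (K x))ᵀ = Ω (K x) * Xp (K x) := by
    rw [hXp _ hKx, ← Matrix.mul_assoc, hΩinv, Matrix.one_mul]
  constructor
  · have : Matrix.vecMul (fun ℓ => pdR ℓ H (K x)) (N x)
        = Matrix.mulVec ((N x)ᵀ * Ω (K x) * L) (Sum.elim ω (fun _ => (0:ℝ))) := by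
      rw [Matrix.mul_assoc, ← Matrix.mulVec_mulVec, ← Matrix.mulVec_mulVec, ← hXHL,
        ← hDH, Matrix.mulVec_transpose]
    rw [this, hNL, Matrix.one_mulVec]
  · intro j
    funext c
    have h1 : Matrix.vecMul (fun ℓ => pdR ℓ (fun z => p z j) (K x)) (N x) c
        = ((N x)ᵀ * Ω (K x) * Xp (K x)) c j := by
      rw [Matrix.mul_assoc, ← hjp]
      simp [Matrix.vecMul, Matrix.mul_apply, dotProduct, jacR, mul_comm]
    have h2 : ((N x)ᵀ * Ω (K x) * Xp (K x)) c j
        = (1 : Matrix (Idx n d) (Idx n d) ℝ) c (Sum.inr j) := by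
      have := congrFun (congrFun hNL c) (Sum.inr j)
      rw [hLdef, Matrix.mul_fromCols] at this
      simpa using this
    rw [h1, h2]
    simp [Matrix.one_apply, Pi.single_apply, eq_comm]
end
end
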